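/- For every f ∈ ℓ¹(ℤ^d) and every n ∈ ℤ^d, the supremum defining the non-centered discrete maximal function is attained: there exist x ∈ ℝ^d and r ≥ 0 with n ∈ Ω̄_r(x) such that M̃f(n) = N(x, r)⁻¹ Σ_{m ∈ ℤ^d ∩ Ω̄_r(x)} |f(m)|. -/

import Mathlib

open scoped BigOperators

noncomputable section

/-- The canonical embedding of a lattice point of `ℤ^d` into `ℝ^d`. -/
def latticeCoe (d : ℕ) (n : Fin d → ℤ) : EuclideanSpace ℝ (Fin d) :=
  WithLp.toLp 2 (fun i => (n i : ℝ))

/-- The dilated "ball" `Ω̄_r(x) = {y : r⁻¹ (y - x) ∈ closure Ω}` for `r > 0`,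
with `Ω̄_0(x) = {x}`. -/
def omegaBall (d : ℕ) (Ω : Set (EuclideanSpace ℝ (Fin d)))
    (x : EuclideanSpace ℝ (Fin d)) (r : ℝ) : Set (EuclideanSpace ℝ (Fin d)) :=
  if r = 0 then {x} else {y | r⁻¹ • (y - x) ∈ closure Ω}

/-- The set of lattice points of `ℤ^d` lying in `Ω̄_r(x)`. -/
def latticePts (d : ℕ) (Ω : Set (EuclideanSpace ℝ (Fin d)))
    (x : EuclideanSpace ℝ (Fin d)) (r : ℝ) : Set (Fin d → ℤ) :=
  {m | latticeCoe d m ∈ omegaBall d Ω x r}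
/-- The non-centered average `A_{(x,r)}|f|(n) = N(x,r)⁻¹ Σ_{m ∈ ℤ^d ∩ Ω̄_r(x)} |f(m)|`. -/
def ncAvg (d : ℕ) (Ω : Set (EuclideanSpace ℝ (Fin d)))
    (f : (Fin d → ℤ) → ℝ) (x : EuclideanSpace ℝ (Fin d)) (r : ℝ) : ℝ :=
  ((latticePts d Ω x r).ncard : ℝ)⁻¹ *
    ∑' m : latticePts d Ω x r, |f (m : Fin d → ℤ)|

/-- The non-centered discrete maximal function `M̃f(n)`, the supremum of the averages
`A_{(x,r)}|f|(n)` over all `x ∈ ℝ^d`, `r ≥ 0` with `n ∈ Ω̄_r(x)`. -/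
def ncMax (d : ℕ) (Ω : Set (EuclideanSpace ℝ (Fin d)))
    (f : (Fin d → ℤ) → ℝ) (n : Fin d → ℤ) : ℝ :=
  ⨆ p : {p : EuclideanSpace ℝ (Fin d) × ℝ //
          0 ≤ p.2 ∧ latticeCoe d n ∈ omegaBall d Ω p.1 p.2},
    ncAvg d Ω f p.1.1 p.1.2

/-- The discrete gradient `∇g(n) = (g(n+e_1)-g(n), …, g(n+e_d)-g(n))` as a vector
in Euclidean space `ℝ^d`. -/
def dgrad (d : ℕ) (g : (Fin d → ℤ) → ℝ) (n : Fin d → ℤ) : EuclideanSpace ℝ (Fin d) :=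
  WithLp.toLp 2 (fun i => g (n + Pi.single i 1) - g n)

namespace NCAux

variable {d : ℕ}

lemma latticeCoe_inj : Function.Injective (latticeCoe d) := by
  intro a b h
  funext i
  have h2 : (a i : ℝ) = b i := congrArg (fun v : EuclideanSpace ℝ (Fin d) => v i) h
  exact_mod_cast h2

lemma abs_coord_le_norm (y : EuclideanSpace ℝ (Fin d)) (i : Fin d) : |y i| ≤ ‖y‖ := by
  rw [EuclideanSpace.norm_eq]
  have h1 : |y i| = Real.sqrt (‖y i‖ ^ 2) := by
    rw [Real.sqrt_sq_eq_abs, Real.norm_eq_abs, abs_abs]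
  rw [h1]
  exact Real.sqrt_le_sqrt (Finset.single_le_sum (fun j _ => sq_nonneg ‖y j‖) (Finset.mem_univ i))

lemma norm_le_of_abs_coord_le {y : EuclideanSpace ℝ (Fin d)} {a : ℝ} (ha : 0 ≤ a)
    (h : ∀ i, |y i| ≤ a) : ‖y‖ ≤ d * a := by
  rw [EuclideanSpace.norm_eq]
  have h1 : ∑ i, ‖y i‖ ^ 2 ≤ ∑ _i : Fin d, a ^ 2 := by
    refine Finset.sum_le_sum fun i _ => ?_
    have hyi : ‖y i‖ ≤ a := by rw [Real.norm_eq_abs]; exact h i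
    exact pow_le_pow_left₀ (norm_nonneg _) hyi 2
  have h2 : ∑ _i : Fin d, a ^ 2 = (d : ℝ) * a ^ 2 := by
    simp [Finset.sum_const, Finset.card_univ]
  calc Real.sqrt (∑ i, ‖y i‖ ^ 2) ≤ Real.sqrt ((d : ℝ) * a ^ 2) := by
        rw [← h2]; exact Real.sqrt_le_sqrt h1
    _ = Real.sqrt d * a := by
        rw [Real.sqrt_mul (Nat.cast_nonneg d), Real.sqrt_sq ha]
    _ ≤ d * a := by
        refine mul_le_mul_of_nonneg_right ?_ ha
        have hd2 : (d : ℝ) ≤ (d : ℝ) ^ 2 := by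
          have : d ≤ d ^ 2 := Nat.le_self_pow (by norm_num) d
          exact_mod_cast this
        calc Real.sqrt d ≤ Real.sqrt ((d : ℝ) ^ 2) := Real.sqrt_le_sqrt hd2
          _ = d := Real.sqrt_sq (Nat.cast_nonneg d)

lemma omegaBall_zero (Ω : Set (EuclideanSpace ℝ (Fin d))) (x : EuclideanSpace ℝ (Fin d)) :
    omegaBall d Ω x 0 = {x} := if_pos rfl

lemma omegaBall_pos (Ω : Set (EuclideanSpace ℝ (Fin d))) (x : EuclideanSpace ℝ (Fin d))
    {r : ℝ} (hr : r ≠ 0) :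
    omegaBall d Ω x r = {y | r⁻¹ • (y - x) ∈ closure Ω} := if_neg hr

lemma norm_bound {Ω : Set (EuclideanSpace ℝ (Fin d))} {C : ℝ}
    (hC : closure Ω ⊆ Metric.closedBall 0 C) {x : EuclideanSpace ℝ (Fin d)} {r : ℝ}
    (hr : 0 < r) {y : EuclideanSpace ℝ (Fin d)} (hy : y ∈ omegaBall d Ω x r) :
    ‖y - x‖ ≤ r * C := by
  rw [omegaBall_pos _ _ hr.ne'] at hy
  have h := hC hy
  rw [Metric.mem_closedBall, dist_zero_right, norm_smul, norm_inv, Real.norm_eq_abs,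
    abs_of_pos hr] at h
  have : r * (r⁻¹ * ‖y - x‖) ≤ r * C := mul_le_mul_of_nonneg_left h hr.le
  rwa [← mul_assoc, mul_inv_cancel₀ hr.ne', one_mul] at this

lemma latticePts_zero (Ω : Set (EuclideanSpace ℝ (Fin d))) (n : Fin d → ℤ) :
    latticePts d Ω (latticeCoe d n) 0 = {n} := by
  ext m
  simp only [latticePts, Set.mem_setOf_eq, omegaBall_zero, Set.mem_singleton_iff]
  exact ⟨fun h => latticeCoe_inj h, fun h => by rw [h]⟩

lemma coord_dist_bound {Ω : Set (EuclideanSpace ℝ (Fin d))} {C : ℝ}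
    (hC : closure Ω ⊆ Metric.closedBall 0 C) {x : EuclideanSpace ℝ (Fin d)} {r : ℝ}
    (hr : 0 < r) {m m' : Fin d → ℤ} (hm : m ∈ latticePts d Ω x r)
    (hm' : m' ∈ latticePts d Ω x r) (i : Fin d) :
    |((m i - m' i : ℤ) : ℝ)| ≤ 2 * (r * C) := by
  have h1 : ‖latticeCoe d m - x‖ ≤ r * C := norm_bound hC hr hm
  have h2 : ‖latticeCoe d m' - x‖ ≤ r * C := norm_bound hC hr hm'
  have c1 : |(m i : ℝ) - x i| ≤ r * C :=
    le_trans (le_of_eq (by simp [latticeCoe])) ((abs_coord_le_norm (latticeCoe d m - x) i).trans h1)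
  have c2 : |(m' i : ℝ) - x i| ≤ r * C :=
    le_trans (le_of_eq (by simp [latticeCoe])) ((abs_coord_le_norm (latticeCoe d m' - x) i).trans h2)
  have : |((m i : ℝ) - x i) - ((m' i : ℝ) - x i)| ≤ |(m i : ℝ) - x i| + |(m' i : ℝ) - x i| :=
    abs_sub _ _
  push_cast
  calc |(m i : ℝ) - m' i| = |((m i : ℝ) - x i) - ((m' i : ℝ) - x i)| := by ring_nf
    _ ≤ |(m i : ℝ) - x i| + |(m' i : ℝ) - x i| := this
    _ ≤ r * C + r * C := add_le_add c1 c2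
    _ = 2 * (r * C) := by ring

lemma latticePts_finite {Ω : Set (EuclideanSpace ℝ (Fin d))} {C : ℝ}
    (hC : closure Ω ⊆ Metric.closedBall 0 C) (x : EuclideanSpace ℝ (Fin d)) {r : ℝ}
    (hr : 0 ≤ r) : (latticePts d Ω x r).Finite := by
  rcases eq_or_lt_of_le hr with h0 | h0
  · rw [← h0]
    have hsub : latticePts d Ω x 0 ⊆ {m | latticeCoe d m = x} := by
      intro m hm
      rw [latticePts, Set.mem_setOf_eq, omegaBall_zero, Set.mem_singleton_iff] at hm
      exact hm
    refine Set.Finite.subset ?_ hsub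
    apply Set.Subsingleton.finite
    intro a ha b hb
    exact latticeCoe_inj (ha.trans hb.symm)
  · refine Set.Finite.subset (Set.finite_Icc (fun i => ⌈x i - r * C⌉) (fun i => ⌊x i + r * C⌋)) ?_
    intro m hm
    have hnorm : ‖latticeCoe d m - x‖ ≤ r * C := norm_bound hC h0 hm
    constructor <;> intro i
    · have : |(m i : ℝ) - x i| ≤ r * C := by
        simpa [latticeCoe] using (abs_coord_le_norm (latticeCoe d m - x) i).trans hnorm
      have hlow : x i - r * C ≤ (m i : ℝ) := by
        have := abs_le.mp this
        linarith [this.1]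
      exact Int.ceil_le.mpr hlow
    · have : |(m i : ℝ) - x i| ≤ r * C := by
        simpa [latticeCoe] using (abs_coord_le_norm (latticeCoe d m - x) i).trans hnorm
      have hhigh : (m i : ℝ) ≤ x i + r * C := by
        have := abs_le.mp this
        linarith [this.2]
      exact Int.le_floor.mpr hhigh

lemma count_lb {Ω : Set (EuclideanSpace ℝ (Fin d))} {δ : ℝ} (hδpos : 0 < δ)
    (hδ : Metric.closedBall 0 δ ⊆ closure Ω) (hd : 1 ≤ d)
    (x : EuclideanSpace ℝ (Fin d)) {r : ℝ} (hr : 0 < r) (N₀ : ℕ)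
    (hbig : (d : ℝ) * (N₀ + 1) ≤ r * δ)
    (hfin : (latticePts d Ω x r).Finite) :
    N₀ ≤ (latticePts d Ω x r).ncard := by
  classical
  set i₀ : Fin d := ⟨0, hd⟩ with hi₀
  set g : Fin N₀ → (Fin d → ℤ) := fun k i => ⌈x i⌉ + if i = i₀ then (k : ℤ) else 0 with hg
  have hginj : Function.Injective g := by
    intro k k' h
    have h2 := congrFun h i₀
    simp only [hg, if_pos rfl, add_right_inj] at h2
    exact Fin.ext (by exact_mod_cast h2)
  have hmem : ∀ k, g k ∈ latticePts d Ω x r := by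
    intro k
    rw [latticePts, Set.mem_setOf_eq, omegaBall_pos _ _ hr.ne', Set.mem_setOf_eq]
    apply hδ
    rw [Metric.mem_closedBall, dist_zero_right, norm_smul, norm_inv, Real.norm_eq_abs,
      abs_of_pos hr]
    have hnorm : ‖latticeCoe d (g k) - x‖ ≤ (d : ℝ) * ((N₀ : ℝ) + 1) := by
      apply norm_le_of_abs_coord_le (by positivity)
      intro i
      have happ : (latticeCoe d (g k) - x) i = ((g k i : ℝ)) - x i := by simp [latticeCoe]
      rw [happ]
      have hceil1 : x i ≤ (⌈x i⌉ : ℝ) := Int.le_ceil _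
      have hceil2 : (⌈x i⌉ : ℝ) < x i + 1 := Int.ceil_lt_add_one _
      have hgki : (g k i : ℝ) = (⌈x i⌉ : ℝ) + (if i = i₀ then (k : ℝ) else 0) := by
        simp only [hg]
        split_ifs <;> push_cast <;> ring
      rw [hgki]
      have ht0 : (0 : ℝ) ≤ (if i = i₀ then (k : ℝ) else 0) := by positivity
      have htN : (if i = i₀ then (k : ℝ) else 0) ≤ (N₀ : ℝ) := by
        split_ifs
        · exact_mod_cast (k.isLt).le
        · positivity
      rw [abs_le]
      constructor <;> nlinarith
    calc r⁻¹ * ‖latticeCoe d (g k) - x‖ ≤ r⁻¹ * (r * δ) := by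
          refine mul_le_mul_of_nonneg_left (hnorm.trans hbig) (by positivity)
      _ = δ := by field_simp
  have hrange : Set.range g ⊆ latticePts d Ω x r := Set.range_subset_iff.mpr hmem
  have hcard : (Set.range g).ncard = N₀ := by
    rw [← Nat.card_coe_set_eq, Nat.card_range_of_injective hginj, Nat.card_eq_fintype_card,
      Fintype.card_fin]
  calc N₀ = (Set.range g).ncard := hcard.symm
    _ ≤ (latticePts d Ω x r).ncard := Set.ncard_le_ncard hrange hfin

end NCAux

/-- **Attainment of the supremum, non-centered case**: for `f ∈ ℓ¹(ℤ^d)` and `n ∈ ℤ^d`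
there is a pair `(x, r)` with `r ≥ 0` and `n ∈ Ω̄_r(x)` realizing the supremum
defining `M̃f(n)`. -/
theorem noncentered_sup_attained (d : ℕ) (hd : 1 ≤ d)
    (Ω : Set (EuclideanSpace ℝ (Fin d))) (hΩopen : IsOpen Ω)
    (hΩbdd : Bornology.IsBounded Ω) (hΩconv : Convex ℝ Ω)
    (hΩzero : (0 : EuclideanSpace ℝ (Fin d)) ∈ Ω)
    (f : (Fin d → ℤ) → ℝ) (hf : Summable (fun n => |f n|)) (n : Fin d → ℤ) :
    ∃ (x : EuclideanSpace ℝ (Fin d)) (r : ℝ), 0 ≤ r ∧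
      latticeCoe d n ∈ omegaBall d Ω x r ∧ ncMax d Ω f n = ncAvg d Ω f x r := by
  classical
  obtain ⟨C₀, hC₀⟩ := hΩbdd.closure.subset_closedBall 0
  set C := max C₀ 0 with hCdef
  have hC : closure Ω ⊆ Metric.closedBall 0 C :=
    hC₀.trans (Metric.closedBall_subset_closedBall (le_max_left _ _))
  have hC0 : 0 ≤ C := le_max_right _ _
  obtain ⟨ε, hεpos, hεball⟩ := Metric.isOpen_iff.mp hΩopen 0 hΩzero
  set δ := ε / 2 with hδdef
  have hδpos : 0 < δ := by positivity
  have hδ : Metric.closedBall (0 : EuclideanSpace ℝ (Fin d)) δ ⊆ closure Ω := by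
    intro y hy
    refine subset_closure (hεball ?_)
    rw [Metric.mem_ball]
    have := Metric.mem_closedBall.mp hy
    rw [hδdef] at this
    linarith
  set ι := {p : EuclideanSpace ℝ (Fin d) × ℝ //
          0 ≤ p.2 ∧ latticeCoe d n ∈ omegaBall d Ω p.1 p.2} with hι
  have hmem₀ : latticeCoe d n ∈ omegaBall d Ω (latticeCoe d n) 0 := by
    rw [NCAux.omegaBall_zero]; exact rfl
  haveI hne : Nonempty ι := ⟨⟨(latticeCoe d n, 0), le_refl 0, hmem₀⟩⟩
  set T := ∑' m, |f m| with hT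
  have hT0 : 0 ≤ T := tsum_nonneg fun m => abs_nonneg _
  have hfinp : ∀ p : ι, (latticePts d Ω p.1.1 p.1.2).Finite :=
    fun p => NCAux.latticePts_finite hC p.1.1 p.2.1
  have hmemn : ∀ p : ι, n ∈ latticePts d Ω p.1.1 p.1.2 := fun p => p.2.2
  have htsumle : ∀ S : Set (Fin d → ℤ), (∑' m : S, |f (m : Fin d → ℤ)|) ≤ T :=
    fun S => Summable.tsum_subtype_le _ S (fun m => abs_nonneg (f m)) hf
  have htsum0 : ∀ S : Set (Fin d → ℤ), 0 ≤ ∑' m : S, |f (m : Fin d → ℤ)| :=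
    fun S => tsum_nonneg fun m => abs_nonneg _
  have havg_le : ∀ (p : ι) (N₀ : ℕ), 0 < N₀ → N₀ ≤ (latticePts d Ω p.1.1 p.1.2).ncard →
      ncAvg d Ω f p.1.1 p.1.2 ≤ (N₀ : ℝ)⁻¹ * T := by
    intro p N₀ hN₀pos hN₀le
    unfold ncAvg
    have hNpos : (0:ℝ) < N₀ := by exact_mod_cast hN₀pos
    apply mul_le_mul _ (htsumle _) (htsum0 _) (by positivity)
    exact inv_anti₀ hNpos (by exact_mod_cast hN₀le)
  have havgT : ∀ p : ι, ncAvg d Ω f p.1.1 p.1.2 ≤ T := by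
    intro p
    have h1 := havg_le p 1 one_pos ((Set.ncard_pos (hfinp p)).mpr ⟨n, hmemn p⟩)
    simpa using h1
  have havg0 : ∀ p : ι, 0 ≤ ncAvg d Ω f p.1.1 p.1.2 := by
    intro p
    exact mul_nonneg (by positivity) (htsum0 _)
  have hbdd : BddAbove (Set.range fun p : ι => ncAvg d Ω f p.1.1 p.1.2) :=
    ⟨T, by rintro v ⟨p, rfl⟩; exact havgT p⟩
  set p₀ : ι := ⟨(latticeCoe d n, 0), le_refl 0, hmem₀⟩ with hp₀
  have hsup : ncMax d Ω f n = ⨆ p : ι, ncAvg d Ω f p.1.1 p.1.2 := rfl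
  rcases le_or_gt (ncMax d Ω f n) 0 with hs0 | hs0
  · refine ⟨latticeCoe d n, 0, le_refl 0, hmem₀, ?_⟩
    have h1 : ncAvg d Ω f (latticeCoe d n) 0 ≤ ncMax d Ω f n := by
      rw [hsup]; exact le_ciSup hbdd p₀
    have h2 : 0 ≤ ncAvg d Ω f (latticeCoe d n) 0 := havg0 p₀
    linarith
  · obtain ⟨N₀, hN₀⟩ := exists_nat_gt (T / ncMax d Ω f n)
    have hN₀pos : 0 < N₀ := by
      have h1 : (0:ℝ) ≤ T / ncMax d Ω f n := div_nonneg hT0 hs0.le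
      exact_mod_cast Nat.cast_pos.mp (lt_of_le_of_lt h1 hN₀)
    have hN₀posR : (0:ℝ) < N₀ := by exact_mod_cast hN₀pos
    have hs' : T / N₀ < ncMax d Ω f n := by
      rw [div_lt_iff₀ hN₀posR]
      have := (div_lt_iff₀ hs0).mp hN₀
      nlinarith
    have claimA : ∀ p : ι, N₀ ≤ (latticePts d Ω p.1.1 p.1.2).ncard →
        ncAvg d Ω f p.1.1 p.1.2 ≤ T / N₀ := by
      intro p hp
      have := havg_le p N₀ hN₀pos hp
      rwa [inv_mul_eq_div] at this
    set R₀ := (d : ℝ) * ((N₀ : ℝ) + 1) / δ with hR₀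
    have claimB : ∀ p : ι, (latticePts d Ω p.1.1 p.1.2).ncard < N₀ → p.1.2 ≤ R₀ := by
      intro p hp
      by_contra hcon
      push_neg at hcon
      have hR₀0 : 0 ≤ R₀ := by positivity
      have hrpos : 0 < p.1.2 := lt_of_le_of_lt hR₀0 hcon
      have hbig : (d : ℝ) * ((N₀ : ℝ) + 1) ≤ p.1.2 * δ := by
        have h1 : R₀ * δ = (d : ℝ) * ((N₀ : ℝ) + 1) := by
          rw [hR₀]; field_simp
        nlinarith
      have := NCAux.count_lb hδpos hδ hd p.1.1 hrpos N₀ hbig (hfinp p)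
      omega
    set K : ℤ := ⌈2 * (R₀ * C)⌉ with hK
    have hK0 : 0 ≤ K := Int.ceil_nonneg (by positivity)
    set box : Set (Fin d → ℤ) := Set.Icc (fun i => n i - K) (fun i => n i + K) with hbox
    have hnbox : n ∈ box := by
      constructor <;> intro i <;> simp <;> omega
    have claimC : ∀ p : ι, p.1.2 ≤ R₀ → latticePts d Ω p.1.1 p.1.2 ⊆ box := by
      intro p hrR m hm
      rcases eq_or_lt_of_le p.2.1 with h0 | h0
      · have hx : latticeCoe d n = p.1.1 := by
          have := p.2.2
          rw [← h0, NCAux.omegaBall_zero, Set.mem_singleton_iff] at this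
          exact this
        have hmn : m = n := by
          rw [latticePts, Set.mem_setOf_eq, ← h0, NCAux.omegaBall_zero,
            Set.mem_singleton_iff, ← hx] at hm
          exact NCAux.latticeCoe_inj hm
        rw [hmn]; exact hnbox
      · have hR₀0 : 0 ≤ R₀ := by positivity
        have hiK : ∀ i, |m i - n i| ≤ K := by
          intro i
          have h1 := NCAux.coord_dist_bound hC h0 hm (hmemn p) i
          have h2 : 2 * (p.1.2 * C) ≤ 2 * (R₀ * C) := by nlinarith
          have h3 : |((m i - n i : ℤ) : ℝ)| ≤ (K : ℝ) :=
            (h1.trans h2).trans (Int.le_ceil _)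
          have h4 : ((|m i - n i| : ℤ) : ℝ) ≤ (K : ℝ) := by push_cast at h3 ⊢; exact h3
          exact_mod_cast h4
        constructor <;> intro i <;> have := abs_le.mp (hiK i) <;>
          simp only [Pi.sub_apply, Pi.add_apply] <;> omega
    have hboxfin : box.Finite := Set.finite_Icc _ _
    have hsubfin : {S : Set (Fin d → ℤ) | S ⊆ box}.Finite := hboxfin.finite_subsets
    set val : Set (Fin d → ℤ) → ℝ :=
      fun S => ((S.ncard : ℝ))⁻¹ * ∑' m : S, |f (m : Fin d → ℤ)| with hvaldef
    have hval : ∀ p : ι, ncAvg d Ω f p.1.1 p.1.2 = val (latticePts d Ω p.1.1 p.1.2) :=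
      fun _ => rfl
    set A : Set ℝ := {v | (∃ p : ι, ncAvg d Ω f p.1.1 p.1.2 = v) ∧ T / N₀ < v} with hA
    have hA_sub : A ⊆ val '' {S : Set (Fin d → ℤ) | S ⊆ box} := by
      rintro v ⟨⟨p, rfl⟩, hv⟩
      have hclt : (latticePts d Ω p.1.1 p.1.2).ncard < N₀ := by
        by_contra hcon
        push_neg at hcon
        exact absurd (claimA p hcon) (not_le.mpr hv)
      exact ⟨_, claimC p (claimB p hclt), (hval p).symm⟩
    have hAfin : A.Finite := (hsubfin.image val).subset hA_sub
    have hAne : A.Nonempty := by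
      obtain ⟨p, hp⟩ := exists_lt_of_lt_ciSup (hsup ▸ hs')
      exact ⟨ncAvg d Ω f p.1.1 p.1.2, ⟨p, rfl⟩, hp⟩
    obtain ⟨v, hvA, hvmax⟩ := Set.Finite.exists_maximalFor id A hAfin hAne
    have hmax' : ∀ w ∈ A, w ≤ v := by
      intro w hw
      rcases le_total w v with h | h
      · exact h
      · exact hvmax hw h
    obtain ⟨pst, hpst⟩ := hvA.1
    refine ⟨pst.1.1, pst.1.2, pst.2.1, pst.2.2, ?_⟩
    have hle1 : ncMax d Ω f n ≤ v := by
      rw [hsup]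
      refine ciSup_le fun p => ?_
      rcases le_or_gt (ncAvg d Ω f p.1.1 p.1.2) (T / N₀) with h | h
      · exact h.trans hvA.2.le
      · exact hmax' _ ⟨⟨p, rfl⟩, h⟩
    have hle2 : v ≤ ncMax d Ω f n := by
      rw [← hpst, hsup]
      exact le_ciSup hbdd pst
    exact (le_antisymm hle1 hle2).trans hpst.symm


end
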